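/- Adding a single pixel P ∉ D to a digital object D cannot decrease the number of holes while changing the number of components: if h(D ∪ {P}) < h(D) then c(D ∪ {P}) = c(D). -/

import Mathlib

open Set

/-- A point of `ℤ²`, identified with the pixel centered there. -/
abbrev Pt := ℤ × ℤ

/-- Two pixels are 0-adjacent if they are distinct and share at least a vertex. -/
def adj0 (a b : Pt) : Prop := a ≠ b ∧ |a.1 - b.1| ≤ 1 ∧ |a.2 - b.2| ≤ 1

/-- Two pixels are 1-adjacent if they share an edge. -/
def adj1 (a b : Pt) : Prop := |a.1 - b.1| + |a.2 - b.2| = 1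

/-- Adjacency parameterized by `α ∈ {0,1}`. -/
def adjA (α : ℕ) : Pt → Pt → Prop := if α = 0 then adj0 else adj1

/-- Connectivity within `S` by a path of consecutively `adj`-adjacent points. -/
def connIn (adj : Pt → Pt → Prop) (S : Set Pt) (x y : Pt) : Prop :=
  Relation.ReflTransGen (fun u v => u ∈ S ∧ v ∈ S ∧ adj u v) x y

/-- The connected components of `S` with respect to `adj`. -/
def components (adj : Pt → Pt → Prop) (S : Set Pt) : Set (Set Pt) :=
  {C | ∃ x ∈ S, C = {y | y ∈ S ∧ connIn adj S x y}}

/-- Number of 0-connected components of `S`. -/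
noncomputable def ccount (S : Set Pt) : ℕ := (components adj0 S).ncard

/-- Number of holes: finite 1-components of the complement of `S`. -/
noncomputable def hcount (S : Set Pt) : ℕ :=
  {C | C ∈ components adj1 Sᶜ ∧ C.Finite}.ncard

/-- The four lattice points `{q, q+(1,0), q+(0,1), q+(1,1)}`: used both for the
corner set of the pixel `q` (in shifted lattice coordinates) and for the 2-block
with base point `q`. -/
def cell (q : Pt) : Set Pt := {q, (q.1 + 1, q.2), (q.1, q.2 + 1), (q.1 + 1, q.2 + 1)}

/-- Number of distinct grid points occurring as corners of pixels of `S`. -/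
noncomputable def vcount (S : Set Pt) : ℕ := (⋃ p ∈ S, cell p).ncard

/-- Number of 2-blocks (2×2 grid squares of pixels) contained in `S`. -/
noncomputable def bcount (S : Set Pt) : ℕ := {q | cell q ⊆ S}.ncard

/-- Diagonal adjacency: 0-adjacent but not 1-adjacent. -/
def diagAdj (a b : Pt) : Prop := |a.1 - b.1| = 1 ∧ |a.2 - b.2| = 1

/-- `w` is a 0-tunnel of `S`: exactly two pixels of `S` have `w` as a corner,
and these two pixels meet only diagonally at `w`. -/
def tunnelAt (S : Set Pt) (w : Pt) : Prop :=
  ∃ a b : Pt, a ∈ S ∧ b ∈ S ∧ diagAdj a b ∧ {p | p ∈ S ∧ w ∈ cell p} = {a, b}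

/-- Number of 0-tunnels of `S`. -/
noncomputable def tcount (S : Set Pt) : ℕ := {w | tunnelAt S w}.ncard

/-- `S` is tunnel-free. -/
def TunnelFree (S : Set Pt) : Prop := ∀ w : Pt, ¬ tunnelAt S w

/-- A consequence-style notion of one-dimensionality: no pixel of `M` is
`adj`-adjacent to three pairwise `adj`-adjacent pixels of `M`. -/
def OneDim (adj : Pt → Pt → Prop) (M : Set Pt) : Prop :=
  ∀ p ∈ M, ¬ ∃ a ∈ M, ∃ b ∈ M, ∃ c ∈ M,
    adj p a ∧ adj p b ∧ adj p c ∧ adj a b ∧ adj a c ∧ adj b c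

/-- `M` is `adj`-connected. -/
def ConnectedObj (adj : Pt → Pt → Prop) (M : Set Pt) : Prop :=
  ∀ x ∈ M, ∀ y ∈ M, connIn adj M x y

/-- A digital curve: a nonempty finite 0-connected one-dimensional digital object. -/
def DigitalCurve (M : Set Pt) : Prop :=
  M.Finite ∧ M.Nonempty ∧ ConnectedObj adj0 M ∧ OneDim adj0 M

/-- A simple closed digital curve with respect to `adj`: a cyclic sequence of
pixels in which the `adj`-adjacent pairs are exactly the cyclically consecutive
ones, and which is one-dimensional. -/
def SimpleClosedCurve (adj : Pt → Pt → Prop) (M : Set Pt) : Prop :=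
  ∃ l : ℕ, 0 < l ∧ ∃ f : ZMod l → Pt, Function.Injective f ∧ Set.range f = M ∧
    (∀ i j : ZMod l, adj (f i) (f j) ↔ j = i + 1 ∨ i = j + 1) ∧ OneDim adj M

/-- A simple digital arc: a nonempty 0-connected proper subset of a simple
closed digital curve. -/
def SimpleArc (adj : Pt → Pt → Prop) (M : Set Pt) : Prop :=
  M.Nonempty ∧ ConnectedObj adj0 M ∧
    ∃ ρ : Set Pt, SimpleClosedCurve adj ρ ∧ M ⊆ ρ ∧ M ≠ ρ
namespace HoleFillAux

/-- The connected component of `x` in `S`. -/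
def comp (adj : Pt → Pt → Prop) (S : Set Pt) (x : Pt) : Set Pt :=
  {y | y ∈ S ∧ connIn adj S x y}

lemma mem_comp_self {adj : Pt → Pt → Prop} {S : Set Pt} {x : Pt} (hx : x ∈ S) :
    x ∈ comp adj S x := ⟨hx, Relation.ReflTransGen.refl⟩

lemma mem_components_iff {adj : Pt → Pt → Prop} {S : Set Pt} {C : Set Pt} :
    C ∈ components adj S ↔ ∃ x ∈ S, C = comp adj S x := Iff.rfl

lemma connIn_symm {adj : Pt → Pt → Prop} (hsym : Symmetric adj) {S : Set Pt} {x y : Pt}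
    (h : connIn adj S x y) : connIn adj S y x := by
  induction h with
  | refl => exact Relation.ReflTransGen.refl
  | tail hb hstep ih =>
      exact Relation.ReflTransGen.head ⟨hstep.2.1, hstep.1, hsym hstep.2.2⟩ ih

lemma connIn_trans {adj : Pt → Pt → Prop} {S : Set Pt} {x y z : Pt}
    (h1 : connIn adj S x y) (h2 : connIn adj S y z) : connIn adj S x z :=
  Relation.ReflTransGen.trans h1 h2

lemma connIn_single {adj : Pt → Pt → Prop} {S : Set Pt} {x y : Pt}
    (hx : x ∈ S) (hy : y ∈ S) (h : adj x y) : connIn adj S x y :=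
  Relation.ReflTransGen.single ⟨hx, hy, h⟩

lemma connIn_mono {adj : Pt → Pt → Prop} {S T : Set Pt} (hST : S ⊆ T) {x y : Pt}
    (h : connIn adj S x y) : connIn adj T x y :=
  by
  induction h with
  | refl => exact Relation.ReflTransGen.refl
  | tail _ hs ih => exact ih.tail ⟨hST hs.1, hST hs.2.1, hs.2.2⟩

lemma comp_congr {adj : Pt → Pt → Prop} (hsym : Symmetric adj) {S : Set Pt} {x y : Pt}
    (hxy : connIn adj S x y) : comp adj S x = comp adj S y := by
  ext z
  exact ⟨fun hz => ⟨hz.1, connIn_trans (connIn_symm hsym hxy) hz.2⟩,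
    fun hz => ⟨hz.1, connIn_trans hxy hz.2⟩⟩

lemma components_eq_of_mem {adj : Pt → Pt → Prop} (hsym : Symmetric adj) {S : Set Pt}
    {C₁ C₂ : Set Pt} (h1 : C₁ ∈ components adj S) (h2 : C₂ ∈ components adj S)
    {z : Pt} (hz1 : z ∈ C₁) (hz2 : z ∈ C₂) : C₁ = C₂ := by
  obtain ⟨x, hx, rfl⟩ := h1
  obtain ⟨y, hy, rfl⟩ := h2
  have e1 : comp adj S x = comp adj S z := comp_congr hsym hz1.2
  have e2 : comp adj S y = comp adj S z := comp_congr hsym hz2.2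
  rw [show ({y_1 | y_1 ∈ S ∧ connIn adj S x y_1} : Set Pt) = comp adj S x from rfl,
    show ({y_1 | y_1 ∈ S ∧ connIn adj S y y_1} : Set Pt) = comp adj S y from rfl, e1, e2]

lemma connIn_diff {adj : Pt → Pt → Prop} {S : Set Pt} {P x y : Pt}
    (hPx : P ∉ comp adj S x) (h : connIn adj S x y) : connIn adj (S \ {P}) x y := by
  induction h with
  | refl => exact Relation.ReflTransGen.refl
  | @tail b c hb hstep ih =>
      have hbP : b ≠ P := fun h => hPx (h ▸ ⟨hstep.1, hb⟩)
      have hcP : c ≠ P := fun h => hPx (h ▸ ⟨hstep.2.1, hb.tail hstep⟩)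
      exact ih.tail ⟨⟨hstep.1, hbP⟩, ⟨hstep.2.1, hcP⟩, hstep.2.2⟩

lemma comp_diff_eq {adj : Pt → Pt → Prop} {S : Set Pt} {P x : Pt}
    (hPx : P ∉ comp adj S x) : comp adj (S \ {P}) x = comp adj S x := by
  ext y
  constructor
  · exact fun hy => ⟨hy.1.1, connIn_mono Set.diff_subset hy.2⟩
  · intro hy
    have hyP : y ≠ P := fun h => hPx (h ▸ hy)
    exact ⟨⟨hy.1, hyP⟩, connIn_diff hPx hy.2⟩

lemma adj0_symm : Symmetric adj0 := by
  intro a b ⟨h1, h2, h3⟩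
  exact ⟨h1.symm, by rwa [abs_sub_comm], by rwa [abs_sub_comm]⟩

lemma adj1_symm : Symmetric adj1 := by
  intro a b h
  unfold adj1 at *
  rwa [abs_sub_comm, abs_sub_comm b.2]

lemma adj1_ne {a b : Pt} (h : adj1 a b) : a ≠ b := by
  intro he
  rw [he] at h
  simp [adj1] at h

end HoleFillAux
namespace HoleFillAux

lemma conn_hseg (S : Set Pt) (y a : ℤ) (k : ℕ)
    (h : ∀ j : ℕ, j ≤ k → ((a + j : ℤ), y) ∈ S) :
    connIn adj1 S (a, y) (a + k, y) := by
  induction k with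
  | zero =>
    simp only [CharP.cast_eq_zero, Nat.cast_zero, add_zero]
    exact Relation.ReflTransGen.refl
  | succ n ih =>
      have h1 : connIn adj1 S (a, y) (a + n, y) := ih (fun j hj => h j (by omega))
      refine h1.tail ⟨h n (by omega), ?_, ?_⟩
      · have := h (n + 1) le_rfl
        simpa [add_assoc] using this
      · show adj1 _ _
        unfold adj1
        simp only []
        push_cast
        rw [show (a + (n:ℤ) - (a + ((n:ℤ) + 1))) = -1 by ring]
        norm_num

lemma conn_vseg (S : Set Pt) (x b : ℤ) (k : ℕ)
    (h : ∀ j : ℕ, j ≤ k → (x, (b + j : ℤ)) ∈ S) :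
    connIn adj1 S (x, b) (x, b + k) := by
  induction k with
  | zero =>
    simp only [CharP.cast_eq_zero, Nat.cast_zero, add_zero]
    exact Relation.ReflTransGen.refl
  | succ n ih =>
      have h1 : connIn adj1 S (x, b) (x, b + n) := ih (fun j hj => h j (by omega))
      refine h1.tail ⟨h n (by omega), ?_, ?_⟩
      · have := h (n + 1) le_rfl
        simpa [add_assoc] using this
      · show adj1 _ _
        unfold adj1
        simp only []
        push_cast
        rw [show (b + (n:ℤ) - (b + ((n:ℤ) + 1))) = -1 by ring]
        norm_num

lemma conn_h (S : Set Pt) {y a b : ℤ}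
    (h : ∀ x : ℤ, min a b ≤ x → x ≤ max a b → (x, y) ∈ S) :
    connIn adj1 S (a, y) (b, y) := by
  rcases le_total a b with hab | hab
  · have := conn_hseg S y a (b - a).toNat
      (fun j hj => h (a + j) (by omega) (by omega))
    rwa [show (a + ((b - a).toNat : ℤ)) = b by omega] at this
  · have := conn_hseg S y b (a - b).toNat
      (fun j hj => h (b + j) (by omega) (by omega))
    rw [show (b + ((a - b).toNat : ℤ)) = a by omega] at this
    exact connIn_symm adj1_symm this

lemma conn_v (S : Set Pt) {x a b : ℤ}
    (h : ∀ y : ℤ, min a b ≤ y → y ≤ max a b → (x, y) ∈ S) :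
    connIn adj1 S (x, a) (x, b) := by
  rcases le_total a b with hab | hab
  · have := conn_vseg S x a (b - a).toNat
      (fun j hj => h (a + j) (by omega) (by omega))
    rwa [show (a + ((b - a).toNat : ℤ)) = b by omega] at this
  · have := conn_vseg S x b (a - b).toNat
      (fun j hj => h (b + j) (by omega) (by omega))
    rw [show (b + ((a - b).toNat : ℤ)) = a by omega] at this
    exact connIn_symm adj1_symm this

/-- Any point outside the bounding box is 1-connected in `Xᶜ` to the corner
`(N+1, N+1)`. -/
lemma far_conn {X : Set Pt} {N : ℤ} (hN0 : 0 ≤ N)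
    (hN : ∀ p ∈ X, |p.1| ≤ N ∧ |p.2| ≤ N) {c : Pt}
    (hc : ¬(|c.1| ≤ N ∧ |c.2| ≤ N)) : connIn adj1 Xᶜ c (N + 1, N + 1) := by
  have hout : ∀ p : Pt, (N < |p.1| ∨ N < |p.2|) → p ∈ Xᶜ := by
    intro p hp hpX
    have := hN p hpX
    omega
  rcases not_and_or.mp hc with h1 | h2
  · -- |c.1| > N : vertical to (c.1, N+1), then horizontal at height N+1
    have step1 : connIn adj1 Xᶜ (c.1, c.2) (c.1, N + 1) :=
      conn_v Xᶜ (fun y _ _ => hout (c.1, y) (Or.inl (not_le.mp h1)))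
    have step2 : connIn adj1 Xᶜ (c.1, N + 1) (N + 1, N + 1) :=
      conn_h Xᶜ (fun x _ _ => hout (x, N + 1)
        (Or.inr (by show N < |N + 1|; rw [abs_of_pos (by omega)]; omega)))
    exact connIn_trans step1 step2
  · -- |c.2| > N : horizontal at height c.2, then vertical along x = N+1
    have step1 : connIn adj1 Xᶜ (c.1, c.2) (N + 1, c.2) :=
      conn_h Xᶜ (fun x _ _ => hout (x, c.2) (Or.inr (not_le.mp h2)))
    have step2 : connIn adj1 Xᶜ (N + 1, c.2) (N + 1, N + 1) :=
      conn_v Xᶜ (fun y _ _ => hout (N + 1, y)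
        (Or.inl (by show N < |N + 1|; rw [abs_of_pos (by omega)]; omega)))
    exact connIn_trans step1 step2

/-- The set of finite 1-components of the complement of a finite set is finite. -/
lemma finite_finite_components {X : Set Pt} (hX : X.Finite) :
    {C | C ∈ components adj1 Xᶜ ∧ C.Finite}.Finite := by
  obtain ⟨N0, hN0⟩ := (hX.image (fun p => |p.1| ⊔ |p.2|)).bddAbove
  set N : ℤ := max N0 0 with hNdef
  have hN0' : (0 : ℤ) ≤ N := le_max_right _ _
  have hN : ∀ p ∈ X, |p.1| ≤ N ∧ |p.2| ≤ N := by
    intro p hp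
    have h := hN0 (Set.mem_image_of_mem (fun p : Pt => |p.1| ⊔ |p.2|) hp)
    exact ⟨le_trans (le_trans (le_max_left _ _) h) (le_max_left _ _),
      le_trans (le_trans (le_max_right _ _) h) (le_max_left _ _)⟩
  set Box : Set Pt := {p | |p.1| ≤ N ∧ |p.2| ≤ N} with hBoxdef
  have hBoxFin : Box.Finite := by
    apply Set.Finite.subset ((Set.finite_Icc (-N) N).prod (Set.finite_Icc (-N) N))
    intro p hp
    simp only [Set.mem_prod, Set.mem_Icc]
    obtain ⟨h1, h2⟩ := hp
    exact ⟨abs_le.mp h1, abs_le.mp h2⟩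
  apply Set.Finite.subset hBoxFin.finite_subsets
  rintro C ⟨hC, hCfin⟩
  obtain ⟨x, hx, rfl⟩ := hC
  intro c hc
  by_contra hcBox
  -- the component of c contains an infinite vertical ray
  have hconn : connIn adj1 Xᶜ c (N + 1, N + 1) := far_conn hN0' hN hcBox
  have hray : ∀ k : ℕ, ((N + 1 : ℤ), (N + 1 + k : ℤ)) ∈ comp adj1 Xᶜ x := by
    intro k
    have hmem : ∀ y : ℤ, N + 1 ≤ y → ((N + 1 : ℤ), y) ∈ Xᶜ := by
      intro y hy hmemX
      have h := (hN _ hmemX).1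
      simp only at h
      rw [abs_of_pos (by omega : (0:ℤ) < N + 1)] at h
      omega
    have hc2 : connIn adj1 Xᶜ (N + 1, N + 1) (N + 1, N + 1 + k) :=
      conn_v Xᶜ (fun y h1 h2 => hmem y (by omega))
    refine ⟨hmem _ (by omega), connIn_trans hc.2 (connIn_trans hconn hc2)⟩
  have hinf : (comp adj1 Xᶜ x).Infinite := by
    apply Set.infinite_of_injective_forall_mem
      (f := fun k : ℕ => (((N + 1 : ℤ), (N + 1 + k : ℤ)) : Pt)) ?_ hray
    intro i j hij
    simp only [Prod.mk.injEq] at hij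
    omega
  exact hinf hCfin

end HoleFillAux
namespace HoleFillAux

lemma axis_mem {D : Set Pt} (hD : D.Finite) {P : Pt} (hP : P ∉ D)
    (hh : hcount (insert P D) < hcount D) : ∀ Q : Pt, adj1 P Q → Q ∈ D := by
  intro Q hQadj
  by_contra hQD
  classical
  have hQP : Q ≠ P := (adj1_ne hQadj).symm
  apply absurd hh
  rw [not_lt]
  have hcompl : (insert P D)ᶜ = Dᶜ \ {P} := by
    ext z
    simp only [Set.mem_compl_iff, Set.mem_insert_iff, Set.mem_diff, Set.mem_singleton_iff, not_or]
    tauto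
  unfold hcount
  rw [hcompl]
  set X : Set Pt := Dᶜ with hXdef
  set X' : Set Pt := Dᶜ \ {P} with hX'def
  have hPX : P ∈ X := hP
  have hQX : Q ∈ X := hQD
  have hQX' : Q ∈ X' := ⟨hQD, hQP⟩
  set f : Set Pt → Set Pt := fun C => if P ∈ C then comp adj1 X' Q else C with hfdef
  -- basic facts about f on finite components of X
  have hkey : ∀ C, C ∈ components adj1 X → C.Finite →
      (f C ∈ components adj1 X' ∧ (f C).Finite ∧ f C ⊆ C ∧ (f C).Nonempty) := by
    rintro C hC hCfin
    obtain ⟨x, hx, rfl⟩ := hC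
    by_cases hPC : P ∈ comp adj1 X x
    · have hfC : f (comp adj1 X x) = comp adj1 X' Q := if_pos hPC
      have hconnxQ : connIn adj1 X x Q :=
        connIn_trans hPC.2 (connIn_single hPX hQX hQadj)
      have hsub : comp adj1 X' Q ⊆ comp adj1 X x := by
        rintro y ⟨hy, hconn⟩
        exact ⟨hy.1, connIn_trans hconnxQ (connIn_mono Set.diff_subset hconn)⟩
      rw [show ({y | y ∈ X ∧ connIn adj1 X x y} : Set Pt) = comp adj1 X x from rfl, hfC]
      exact ⟨⟨Q, hQX', rfl⟩, hCfin.subset hsub, hsub, ⟨Q, mem_comp_self hQX'⟩⟩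
    · have hfC : f (comp adj1 X x) = comp adj1 X x := if_neg hPC
      rw [show ({y | y ∈ X ∧ connIn adj1 X x y} : Set Pt) = comp adj1 X x from rfl, hfC]
      have hxP : x ≠ P := fun h => hPC (h ▸ mem_comp_self hx)
      refine ⟨⟨x, ⟨hx, hxP⟩, ?_⟩, hCfin, subset_rfl, ⟨x, mem_comp_self hx⟩⟩
      exact (comp_diff_eq hPC).symm
  apply Set.ncard_le_ncard_of_injOn f ?_ ?_ (hcompl ▸ finite_finite_components (hD.insert P))
  · rintro C ⟨hC, hCfin⟩
    obtain ⟨h1, h2, _, _⟩ := hkey C hC hCfin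
    exact ⟨h1, h2⟩
  · rintro C₁ ⟨hC₁, hC₁f⟩ C₂ ⟨hC₂, hC₂f⟩ hf
    obtain ⟨_, _, hsub₁, ⟨z, hz⟩⟩ := hkey C₁ hC₁ hC₁f
    obtain ⟨_, _, hsub₂, _⟩ := hkey C₂ hC₂ hC₂f
    exact components_eq_of_mem adj1_symm hC₁ hC₂ (hsub₁ hz) (hsub₂ (hf ▸ hz))

end HoleFillAux
namespace HoleFillAux

lemma adj0_mk {a1 a2 b1 b2 : ℤ}
    (h : ¬(a1 = b1 ∧ a2 = b2) ∧ -1 ≤ a1 - b1 ∧ a1 - b1 ≤ 1 ∧ -1 ≤ a2 - b2 ∧ a2 - b2 ≤ 1) :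
    adj0 (a1, a2) (b1, b2) := by
  obtain ⟨hne, h1, h2, h3, h4⟩ := h
  refine ⟨?_, abs_le.mpr ⟨h1, h2⟩, abs_le.mpr ⟨h3, h4⟩⟩
  intro he
  rw [Prod.mk.injEq] at he
  exact hne he

/-- Every 0-neighbor of `P` lying in `D` is 0-connected within `D` to the north
neighbor of `P`, provided all four axis neighbors of `P` are in `D`. -/
lemma nbr_conn {D : Set Pt} {P : Pt}
    (h4 : ∀ Q : Pt, adj1 P Q → Q ∈ D) :
    ∀ u ∈ D, adj0 u P → connIn adj0 D u (P.1, P.2 + 1) := by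
  obtain ⟨p1, p2⟩ := P
  have e1 : ∀ z : ℤ, |z - (z + 1)| = 1 := fun z => by
    rw [show z - (z + 1) = -1 by ring]; norm_num
  have e2 : ∀ z : ℤ, |z - (z - 1)| = 1 := fun z => by
    rw [show z - (z - 1) = 1 by ring]; norm_num
  have e0 : ∀ z : ℤ, |z - z| = 0 := fun z => by simp
  have hN : ((p1, p2 + 1) : Pt) ∈ D := h4 _ (by show |p1 - p1| + |p2 - (p2 + 1)| = 1; rw [e0, e1]; ring)
  have hS : ((p1, p2 - 1) : Pt) ∈ D := h4 _ (by show |p1 - p1| + |p2 - (p2 - 1)| = 1; rw [e0, e2]; ring)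
  have hE : ((p1 + 1, p2) : Pt) ∈ D := h4 _ (by show |p1 - (p1 + 1)| + |p2 - p2| = 1; rw [e0, e1]; ring)
  have hW : ((p1 - 1, p2) : Pt) ∈ D := h4 _ (by show |p1 - (p1 - 1)| + |p2 - p2| = 1; rw [e0, e2]; ring)
  rintro ⟨u1, u2⟩ hu ⟨hne, h1, h2⟩
  simp only at h1 h2
  have hb1 := abs_le.mp h1
  have hb2 := abs_le.mp h2
  have hd1 : u1 = p1 - 1 ∨ u1 = p1 ∨ u1 = p1 + 1 := by omega
  have hd2 : u2 = p2 - 1 ∨ u2 = p2 ∨ u2 = p2 + 1 := by omega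
  rcases hd1 with rfl | rfl | rfl <;> rcases hd2 with rfl | rfl | rfl
  -- (p1-1, p2-1): SW → W → N
  · exact connIn_trans (connIn_single hu hW (adj0_mk (by omega)))
      (connIn_single hW hN (adj0_mk (by omega)))
  -- (p1-1, p2): W → N
  · exact connIn_single hu hN (adj0_mk (by omega))
  -- (p1-1, p2+1): NW → N
  · exact connIn_single hu hN (adj0_mk (by omega))
  -- (p1, p2-1): S → W → N
  · exact connIn_trans (connIn_single hu hW (adj0_mk (by omega)))
      (connIn_single hW hN (adj0_mk (by omega)))
  -- (p1, p2) = P : contradiction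
  · exact absurd rfl hne
  -- (p1, p2+1) = N : refl
  · exact Relation.ReflTransGen.refl
  -- (p1+1, p2-1): SE → E → N
  · exact connIn_trans (connIn_single hu hE (adj0_mk (by omega)))
      (connIn_single hE hN (adj0_mk (by omega)))
  -- (p1+1, p2): E → N
  · exact connIn_single hu hN (adj0_mk (by omega))
  -- (p1+1, p2+1): NE → N
  · exact connIn_single hu hN (adj0_mk (by omega))

/-- 0-connectivity in `insert P D` between points of `D` implies 0-connectivity
in `D`, when the four axis neighbors of `P` lie in `D`. -/
lemma conn_insert_to {D : Set Pt} {P : Pt} (hP : P ∉ D)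
    (h4 : ∀ Q : Pt, adj1 P Q → Q ∈ D) {x y : Pt} (hx : x ∈ D)
    (h : connIn adj0 (insert P D) x y) (hy : y ∈ D) : connIn adj0 D x y := by
  have nbr := nbr_conn h4
  have key : ∀ z : Pt, connIn adj0 (insert P D) x z →
      (z ∈ D → connIn adj0 D x z) ∧ (z = P → connIn adj0 D x (P.1, P.2 + 1)) := by
    intro z hz
    induction hz with
    | refl => exact ⟨fun _ => Relation.ReflTransGen.refl, fun hxP => absurd (hxP ▸ hx) hP⟩
    | @tail b c hb hstep ih =>
        constructor
        · intro hc
          rcases Set.mem_insert_iff.mp hstep.1 with hbP | hbD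
          · have h1 : connIn adj0 D x (P.1, P.2 + 1) := ih.2 hbP
            have h2 : connIn adj0 D c (P.1, P.2 + 1) :=
              nbr c hc (adj0_symm (hbP ▸ hstep.2.2))
            exact connIn_trans h1 (connIn_symm adj0_symm h2)
          · exact (ih.1 hbD).tail ⟨hbD, hc, hstep.2.2⟩
        · intro hcP
          rcases Set.mem_insert_iff.mp hstep.1 with hbP | hbD
          · exact absurd (hbP.trans hcP.symm) hstep.2.2.1
          · exact connIn_trans (ih.1 hbD) (nbr b hbD (hcP ▸ hstep.2.2))
  exact (key y h).1 hy

end HoleFillAux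
theorem hole_fill_components_stable (D : Set Pt) (hD : D.Finite) (P : Pt)
    (hP : P ∉ D) (hh : hcount (insert P D) < hcount D) :
    ccount (insert P D) = ccount D := by
  classical
  open HoleFillAux in
  have h4 : ∀ Q : Pt, adj1 P Q → Q ∈ D := HoleFillAux.axis_mem hD hP hh
  have hadjN : adj1 P (P.1, P.2 + 1) := by
    show |P.1 - P.1| + |P.2 - (P.2 + 1)| = 1
    rw [sub_self, abs_zero, show P.2 - (P.2 + 1) = -1 by ring]
    norm_num
  have hNnD : ((P.1, P.2 + 1) : Pt) ∈ D := h4 _ hadjN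
  have hDS : D ⊆ insert P D := Set.subset_insert _ _
  have hPS : P ∈ insert P D := Set.mem_insert _ _
  have hadj0PN : adj0 P (P.1, P.2 + 1) := by
    refine ⟨?_, by simp, ?_⟩
    · intro h
      have h2 := congrArg Prod.snd h
      simp only at h2
      omega
    · show |P.2 - (P.2 + 1)| ≤ 1
      rw [show P.2 - (P.2 + 1) = -1 by ring]
      norm_num
  have s1 : ∀ x ∈ D, HoleFillAux.comp adj0 (insert P D) x \ {P} = HoleFillAux.comp adj0 D x := by
    intro x hx
    ext y
    constructor
    · rintro ⟨⟨hyS, hconn⟩, hyP⟩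
      have hyD : y ∈ D := by
        rcases Set.mem_insert_iff.mp hyS with rfl | hyD
        · exact absurd rfl hyP
        · exact hyD
      exact ⟨hyD, HoleFillAux.conn_insert_to hP h4 hx hconn hyD⟩
    · rintro ⟨hyD, hconn⟩
      exact ⟨⟨hDS hyD, HoleFillAux.connIn_mono hDS hconn⟩, fun h => hP (h ▸ hyD)⟩
  have s2 : HoleFillAux.comp adj0 (insert P D) P
      = HoleFillAux.comp adj0 (insert P D) (P.1, P.2 + 1) :=
    HoleFillAux.comp_congr HoleFillAux.adj0_symm
      (HoleFillAux.connIn_single hPS (hDS hNnD) hadj0PN)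
  have himg : (fun C => C \ {P}) '' components adj0 (insert P D) = components adj0 D := by
    ext C
    constructor
    · rintro ⟨C', ⟨x, hxS, rfl⟩, rfl⟩
      show HoleFillAux.comp adj0 (insert P D) x \ {P} ∈ components adj0 D
      rcases Set.mem_insert_iff.mp hxS with rfl | hxD
      · rw [s2, s1 _ hNnD]
        exact ⟨_, hNnD, rfl⟩
      · rw [s1 x hxD]
        exact ⟨x, hxD, rfl⟩
    · rintro ⟨x, hxD, rfl⟩
      exact ⟨HoleFillAux.comp adj0 (insert P D) x, ⟨x, hDS hxD, rfl⟩, s1 x hxD⟩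
  have hinj : Set.InjOn (fun C => C \ {P}) (components adj0 (insert P D)) := by
    rintro C₁ h₁ C₂ h₂ he
    obtain ⟨x₁, hx₁, rfl⟩ := h₁
    obtain ⟨x₂, hx₂, rfl⟩ := h₂
    have rep : ∀ x ∈ insert P D, ∃ y ∈ D,
        HoleFillAux.comp adj0 (insert P D) x = HoleFillAux.comp adj0 (insert P D) y := by
      intro x hx
      rcases Set.mem_insert_iff.mp hx with rfl | hxD
      · exact ⟨_, hNnD, s2⟩
      · exact ⟨x, hxD, rfl⟩
    obtain ⟨y₁, hy₁, e₁⟩ := rep x₁ hx₁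
    obtain ⟨y₂, hy₂, e₂⟩ := rep x₂ hx₂
    have he' : HoleFillAux.comp adj0 (insert P D) x₁ \ {P}
        = HoleFillAux.comp adj0 (insert P D) x₂ \ {P} := he
    rw [e₁, e₂] at he'
    rw [s1 y₁ hy₁, s1 y₂ hy₂] at he'
    have hmem : y₁ ∈ HoleFillAux.comp adj0 D y₂ :=
      he' ▸ HoleFillAux.mem_comp_self hy₁
    have hc1 : connIn adj0 (insert P D) x₁ y₁ :=
      (e₁ ▸ HoleFillAux.mem_comp_self (hDS hy₁) :
        y₁ ∈ HoleFillAux.comp adj0 (insert P D) x₁).2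
    have hc2 : connIn adj0 (insert P D) x₂ y₂ :=
      (e₂ ▸ HoleFillAux.mem_comp_self (hDS hy₂) :
        y₂ ∈ HoleFillAux.comp adj0 (insert P D) x₂).2
    have hc3 : connIn adj0 (insert P D) y₁ y₂ :=
      HoleFillAux.connIn_mono hDS
        (HoleFillAux.connIn_symm HoleFillAux.adj0_symm hmem.2)
    have hc : connIn adj0 (insert P D) x₁ x₂ :=
      HoleFillAux.connIn_trans (HoleFillAux.connIn_trans hc1 hc3)
        (HoleFillAux.connIn_symm HoleFillAux.adj0_symm hc2)
    show HoleFillAux.comp adj0 (insert P D) x₁ = HoleFillAux.comp adj0 (insert P D) x₂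
    exact HoleFillAux.comp_congr HoleFillAux.adj0_symm hc
  unfold ccount
  rw [← himg, Set.ncard_image_of_injOn hinj]
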